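/- The per-sensor energy-consumption function E(t) = α·(T−t)/(η·β·h) + (t/(η·h²))·f((T−t)/(R·β·t)) is strictly convex on the open interval (0, T). -/

import Mathlib

open Real Set

lemma strictConvexOn_congr {s : Set ℝ} {f g : ℝ → ℝ} (h : ∀ x ∈ s, f x = g x)
    (hg : StrictConvexOn ℝ s g) : StrictConvexOn ℝ s f := by
  refine ⟨hg.1, fun x hx y hy hxy a b ha hb hab => ?_⟩
  rw [h x hx, h y hy, h _ (hg.1 hx hy ha.le hb.le hab)]
  exact hg.2 hx hy hxy ha hb hab

lemma aux_d1 (k m c c' : ℝ) {t : ℝ} (ht : t ≠ 0) :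
    HasDerivAt (fun t => m * t + c + c' * (t * Real.exp (k / t)))
      (m + c' * (Real.exp (k / t) * (1 - k / t))) t := by
  have h1 : HasDerivAt (fun t : ℝ => k / t) (-(k / t ^ 2)) t := by
    simpa [div_eq_mul_inv, mul_comm] using (hasDerivAt_inv ht).const_mul k
  have h2 : HasDerivAt (fun t : ℝ => Real.exp (k / t))
      (Real.exp (k / t) * (-(k / t ^ 2))) t := h1.exp
  have h3 : HasDerivAt (fun t : ℝ => t * Real.exp (k / t))
      (1 * Real.exp (k / t) + t * (Real.exp (k / t) * (-(k / t ^ 2)))) t :=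
    (hasDerivAt_id t).mul h2
  have h4 := ((hasDerivAt_id t).const_mul m).add_const c |>.add (h3.const_mul c')
  refine h4.congr_deriv ?_
  field_simp
  ring

lemma aux_d2 (k m c' : ℝ) {t : ℝ} (ht : t ≠ 0) :
    HasDerivAt (fun t => m + c' * (Real.exp (k / t) * (1 - k / t)))
      (c' * (Real.exp (k / t) * (k ^ 2 / t ^ 3))) t := by
  have h1 : HasDerivAt (fun t : ℝ => k / t) (-(k / t ^ 2)) t := by
    simpa [div_eq_mul_inv, mul_comm] using (hasDerivAt_inv ht).const_mul k
  have h2 : HasDerivAt (fun t : ℝ => Real.exp (k / t))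
      (Real.exp (k / t) * (-(k / t ^ 2))) t := h1.exp
  have h5 : HasDerivAt (fun t : ℝ => 1 - k / t) (-(-(k / t ^ 2))) t :=
    (h1.const_sub 1)
  have h6 := (h2.mul h5).const_mul c'
  have h7 := (h6.const_add m)
  refine h7.congr_deriv ?_
  field_simp
  ring

lemma aux_convex (k m c c' T : ℝ) (hk : 0 < k) (hc' : 0 < c') (hT : 0 < T) :
    StrictConvexOn ℝ (Ioo 0 T)
      (fun t => m * t + c + c' * (t * Real.exp (k / t))) := by
  apply strictConvexOn_of_deriv2_pos (convex_Ioo 0 T)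
  · apply ContinuousOn.add (by fun_prop)
    apply ContinuousOn.mul continuousOn_const
    apply ContinuousOn.mul continuousOn_id
    apply ContinuousOn.rexp
    exact ContinuousOn.div continuousOn_const continuousOn_id
      (fun x hx => ne_of_gt hx.1)
  · intro x hx
    rw [interior_Ioo] at hx
    have hx0 : x ≠ 0 := ne_of_gt hx.1
    have hderiv : ∀ y ∈ Ioi (0:ℝ),
        deriv (fun t => m * t + c + c' * (t * Real.exp (k / t))) y
          = m + c' * (Real.exp (k / y) * (1 - k / y)) := by
      intro y hy
      exact (aux_d1 k m c c' (ne_of_gt hy)).deriv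
    have heq : deriv (fun t => m * t + c + c' * (t * Real.exp (k / t)))
        =ᶠ[nhds x] (fun y => m + c' * (Real.exp (k / y) * (1 - k / y))) := by
      filter_upwards [isOpen_Ioi.mem_nhds hx.1] with y hy using hderiv y hy
    have : deriv^[2] (fun t => m * t + c + c' * (t * Real.exp (k / t))) x
        = c' * (Real.exp (k / x) * (k ^ 2 / x ^ 3)) := by
      simp only [Function.iterate_succ, Function.iterate_zero, Function.comp_apply, id]
      rw [heq.deriv_eq]
      exact (aux_d2 k m c' hx0).deriv
    rw [this]
    exact mul_pos hc' (mul_pos (Real.exp_pos _) (div_pos (pow_pos hk 2) (pow_pos hx.1 3)))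

theorem energy_strictly_convex
    (N0 B α β h R η T : ℝ)
    (hN0 : 0 < N0) (hB : 0 < B) (hα : 0 < α) (hβ : 0 < β)
    (hh : 0 < h) (hR : 0 < R) (hη : 0 < η) (hT : 0 < T) :
    StrictConvexOn ℝ (Ioo 0 T)
      (fun t : ℝ =>
        α * (T - t) / (η * β * h)
          + (t / (η * h ^ 2)) * (N0 * ((2 : ℝ) ^ ((T - t) / (R * β * t) / B) - 1))) := by
  set k : ℝ := Real.log 2 * T / (R * β * B) with hkdef
  set C : ℝ := N0 / (η * h ^ 2) with hCdef
  set c' : ℝ := C * Real.exp (-(Real.log 2 / (R * β * B))) with hc'def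
  set m : ℝ := -α / (η * β * h) - C with hmdef
  set c : ℝ := α * T / (η * β * h) with hcdef
  have hlog2 : 0 < Real.log 2 := Real.log_pos one_lt_two
  have hk : 0 < k := by rw [hkdef]; positivity
  have hC : 0 < C := by rw [hCdef]; positivity
  have hc' : 0 < c' := by rw [hc'def, hCdef]; positivity
  apply strictConvexOn_congr _ (aux_convex k m c c' T hk hc' hT)
  intro t ht
  have ht0 : (0:ℝ) < t := ht.1
  have hrw : (2 : ℝ) ^ ((T - t) / (R * β * t) / B)
      = Real.exp (-(Real.log 2 / (R * β * B))) * Real.exp (k / t) := by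
    rw [Real.rpow_def_of_pos (by norm_num : (0:ℝ) < 2), ← Real.exp_add]
    congr 1
    rw [hkdef]
    field_simp
    ring
  rw [hrw]
  rw [hkdef, hmdef, hcdef, hc'def, hCdef]
  field_simp
  ring
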